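/- For m = 2, the system of polynomial equations Σᵢ₌₁² Σ_{n₁+2n₂=ℓ} s₃ᵢ² s₁ᵢ^{n₁} s₂ᵢ^{n₂}/(n₁! n₂!) = 0 for ℓ = 1, 2, 3 admits a non-trivial solution, i.e., there exist reals s₁₁, s₁₂, s₂₁, s₂₂, s₃₁, s₃₂ with s₃₁ ≠ 0, s₃₂ ≠ 0, and at least one of s₁₁, s₁₂ nonzero satisfying all three equations. -/
import Mathlib

/-- For `m = 2`, the polynomial system `Σᵢ Σ_{n₁+2n₂=ℓ} s₃ᵢ² s₁ᵢ^{n₁} s₂ᵢ^{n₂}/(n₁!n₂!) = 0`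
for `ℓ = 1, 2, 3` admits a non-trivial solution: both `s₃ᵢ` nonzero and at least one
`s₁ᵢ` nonzero. -/
theorem stmt_7 :
    ∃ s₁₁ s₁₂ s₂₁ s₂₂ s₃₁ s₃₂ : ℝ,
      s₃₁ ≠ 0 ∧ s₃₂ ≠ 0 ∧ (s₁₁ ≠ 0 ∨ s₁₂ ≠ 0) ∧
      s₃₁^2 * s₁₁ + s₃₂^2 * s₁₂ = 0 ∧
      s₃₁^2 * (s₁₁^2 / 2 + s₂₁) + s₃₂^2 * (s₁₂^2 / 2 + s₂₂) = 0 ∧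
      s₃₁^2 * (s₁₁^3 / 6 + s₁₁ * s₂₁) + s₃₂^2 * (s₁₂^3 / 6 + s₁₂ * s₂₂) = 0 := by
  exact ⟨1, -1, -1/2, -1/2, 1, 1, one_ne_zero, one_ne_zero, Or.inl one_ne_zero,
    by norm_num, by norm_num, by norm_num⟩
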